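/- For pressure laws p^i(ρ) = a_i² ρ with a_i > 0, constants C_i > 0 and λ > 0, define α_i(z) = C_i exp(λ²θ z/(2a_i²)), ρ^i(t,x) = α_i(λt - x), q^i(t,x) = λ α_i(λt - x). Then these traveling waves satisfy the coupled isothermal Euler system ρ^i_t + q^i_x = 0 and q^i_t + (a_i²ρ^i + (q^i)²/ρ^i)_x = -(θ/2) q^i|q^i|/ρ^i - Ω ρ^i(v^i - v); in particular v^i = v = λ for all i, so the coupling terms vanish. -/

import Mathlib

/-- The traveling-wave profile α_i(z) = C_i exp(λ²θ z/(2a_i²)) of Example 2. -/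
noncomputable def αEx (C a θ lam z : ℝ) : ℝ := C * Real.exp (lam ^ 2 * θ / (2 * a ^ 2) * z)

lemma αEx_pos {C : ℝ} (hC : 0 < C) (a θ lam z : ℝ) : 0 < αEx C a θ lam z :=
  mul_pos hC (Real.exp_pos _)

lemma hasDerivAt_αEx (C a θ lam z : ℝ) :
    HasDerivAt (αEx C a θ lam)
      (lam ^ 2 * θ / (2 * a ^ 2) * αEx C a θ lam z) z := by
  have h : HasDerivAt (fun z : ℝ => lam ^ 2 * θ / (2 * a ^ 2) * z)
      (lam ^ 2 * θ / (2 * a ^ 2)) z := by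
    simpa using (hasDerivAt_id z).const_mul (lam ^ 2 * θ / (2 * a ^ 2))
  have := (h.exp).const_mul C
  refine this.congr_deriv ?_
  unfold αEx; ring

theorem example2_traveling_waves_solve_coupled_isothermal_euler
    (n : ℕ) (a C : Fin n → ℝ) (ha : ∀ i, 0 < a i) (hC : ∀ i, 0 < C i)
    (θ lam Ω : ℝ) (hθ : 0 < θ) (hlam : 0 < lam) :
    ∀ i : Fin n, ∀ t x : ℝ,
      -- continuity equation ρ^i_t + q^i_x = 0
      (∃ dρt dqx : ℝ,
        HasDerivAt (fun s => αEx (C i) (a i) θ lam (lam * s - x)) dρt t ∧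
        HasDerivAt (fun y => lam * αEx (C i) (a i) θ lam (lam * t - y)) dqx x ∧
        dρt + dqx = 0) ∧
      -- momentum equation q^i_t + (a_i²ρ^i + (q^i)²/ρ^i)_x = −(θ/2)q^i|q^i|/ρ^i − Ω ρ^i(v^i − v)
      (∃ dqt dfx : ℝ,
        HasDerivAt (fun s => lam * αEx (C i) (a i) θ lam (lam * s - x)) dqt t ∧
        HasDerivAt
          (fun y => (a i) ^ 2 * αEx (C i) (a i) θ lam (lam * t - y)
            + (lam * αEx (C i) (a i) θ lam (lam * t - y)) ^ 2
              / αEx (C i) (a i) θ lam (lam * t - y)) dfx x ∧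
        dqt + dfx
          = -(θ / 2) * (lam * αEx (C i) (a i) θ lam (lam * t - x)
                * |lam * αEx (C i) (a i) θ lam (lam * t - x)|)
              / αEx (C i) (a i) θ lam (lam * t - x)
            - Ω * αEx (C i) (a i) θ lam (lam * t - x)
              * (lam * αEx (C i) (a i) θ lam (lam * t - x)
                    / αEx (C i) (a i) θ lam (lam * t - x)
                - (∑ j, αEx (C j) (a j) θ lam (lam * t - x)
                      * (lam * αEx (C j) (a j) θ lam (lam * t - x)
                          / αEx (C j) (a j) θ lam (lam * t - x)))
                  / (∑ j, αEx (C j) (a j) θ lam (lam * t - x)))) ∧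
      -- each component velocity equals λ, hence equals the barycentric velocity
      lam * αEx (C i) (a i) θ lam (lam * t - x)
          / αEx (C i) (a i) θ lam (lam * t - x) = lam ∧
      (∑ j, αEx (C j) (a j) θ lam (lam * t - x)
            * (lam * αEx (C j) (a j) θ lam (lam * t - x)
                / αEx (C j) (a j) θ lam (lam * t - x)))
          / (∑ j, αEx (C j) (a j) θ lam (lam * t - x)) = lam := by
  intro i t x
  set k := lam ^ 2 * θ / (2 * (a i) ^ 2) with hk
  set α := αEx (C i) (a i) θ lam (lam * t - x) with hα
  have hαpos : 0 < α := αEx_pos (hC i) _ _ _ _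
  have hαne : α ≠ 0 := hαpos.ne'
  -- velocity identities
  have hvi : ∀ j, lam * αEx (C j) (a j) θ lam (lam * t - x)
      / αEx (C j) (a j) θ lam (lam * t - x) = lam := by
    intro j
    rw [mul_div_assoc, div_self (αEx_pos (hC j) _ _ _ _).ne', mul_one]
  have hsumpos : 0 < ∑ j, αEx (C j) (a j) θ lam (lam * t - x) := by
    apply Finset.sum_pos (fun j _ => αEx_pos (hC j) _ _ _ _)
    exact ⟨i, Finset.mem_univ i⟩
  have hv : (∑ j, αEx (C j) (a j) θ lam (lam * t - x)
        * (lam * αEx (C j) (a j) θ lam (lam * t - x)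
            / αEx (C j) (a j) θ lam (lam * t - x)))
      / (∑ j, αEx (C j) (a j) θ lam (lam * t - x)) = lam := by
    have : ∀ j ∈ Finset.univ, αEx (C j) (a j) θ lam (lam * t - x)
        * (lam * αEx (C j) (a j) θ lam (lam * t - x)
            / αEx (C j) (a j) θ lam (lam * t - x))
        = αEx (C j) (a j) θ lam (lam * t - x) * lam := by
      intro j _; rw [hvi j]
    rw [Finset.sum_congr rfl this, ← Finset.sum_mul, mul_comm,
      mul_div_assoc, div_self hsumpos.ne', mul_one]
  -- derivatives in t and x of the inner argument
  have hin_t : HasDerivAt (fun s : ℝ => lam * s - x) lam t := by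
    simpa using ((hasDerivAt_id t).const_mul lam).sub_const x
  have hin_x : HasDerivAt (fun y : ℝ => lam * t - y) (-1) x := by
    simpa using (hasDerivAt_id x).const_sub (lam * t)
  have hαt : HasDerivAt (fun s => αEx (C i) (a i) θ lam (lam * s - x))
      (k * α * lam) t := by
    have := (hasDerivAt_αEx (C i) (a i) θ lam (lam * t - x)).comp t hin_t
    exact this
  have hαx : HasDerivAt (fun y => αEx (C i) (a i) θ lam (lam * t - y))
      (k * α * (-1)) x :=
    (hasDerivAt_αEx (C i) (a i) θ lam (lam * t - x)).comp x hin_x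
  refine ⟨⟨k * α * lam, lam * (k * α * (-1)), hαt, hαx.const_mul lam, by ring⟩,
    ⟨lam * (k * α * lam), ((a i) ^ 2 + lam ^ 2) * (k * α * (-1)),
      hαt.const_mul lam, ?_, ?_⟩, hvi i, hv⟩
  · have heq : (fun y => (a i) ^ 2 * αEx (C i) (a i) θ lam (lam * t - y)
        + (lam * αEx (C i) (a i) θ lam (lam * t - y)) ^ 2
          / αEx (C i) (a i) θ lam (lam * t - y))
        = fun y => ((a i) ^ 2 + lam ^ 2) * αEx (C i) (a i) θ lam (lam * t - y) := by
      funext y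
      have h := (αEx_pos (hC i) (a i) θ lam (lam * t - y)).ne'
      field_simp
    rw [heq]
    exact hαx.const_mul _
  · rw [hvi i, hv, sub_self, mul_zero, sub_zero]
    have habs : |lam * α| = lam * α := abs_of_pos (mul_pos hlam hαpos)
    rw [habs]
    have hane : (a i) ^ 2 ≠ 0 := pow_ne_zero 2 (ha i).ne'
    rw [hk]
    field_simp
    ring_nf
    rw [inv_pow, mul_inv_cancel₀ hane]
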